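/- Let tr be a trace over Σ, let φ₁, φ₂ be LTL formulae, let cs1₀, cs2₀ be the characteristic sequences of φ₁ and φ₂ over tr, and define iteratively, for all j ∈ ℕ: cs1_{i+1}(j) = cs1_i(j) AND cs1_i(j + 2^i), and cs2_{i+1}(j) = cs2_i(j) OR (cs1_i(j) AND cs2_i(j + 2^i)). Then for every i ∈ ℕ and every j ∈ ℕ: (a) cs1_i(j) = true if and only if j + 2^i ≤ |tr| and tr, k ⊨ φ₁ for all j ≤ k < j + 2^i; and (b) cs2_i(j) = true if and only if tr, j ⊨ φ₁ U≤2^i φ₂. -/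

import Mathlib

/-- LTL formulae over an alphabet `α`. -/
inductive LTL (α : Type) : Type where
  | atom : α → LTL α
  | neg : LTL α → LTL α
  | conj : LTL α → LTL α → LTL α
  | disj : LTL α → LTL α → LTL α
  | next : LTL α → LTL α
  | ev : LTL α → LTL α
  | alw : LTL α → LTL α
  | untl : LTL α → LTL α → LTL α

/-- Finite-trace satisfaction `tr, i ⊨ φ`: false whenever `i ≥ |tr|`,
and for `i < |tr|` the standard clauses. A trace is a finite sequence
(list) of sets of characters. -/
def Sat {α : Type} (tr : List (Set α)) : LTL α → ℕ → Prop
  | .atom p, i => i < tr.length ∧ p ∈ tr.getD i ∅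
  | .neg φ, i => i < tr.length ∧ ¬ Sat tr φ i
  | .conj φ ψ, i => Sat tr φ i ∧ Sat tr ψ i
  | .disj φ ψ, i => i < tr.length ∧ (Sat tr φ i ∨ Sat tr ψ i)
  | .next φ, i => Sat tr φ (i + 1)
  | .ev φ, i => ∃ j, i ≤ j ∧ j < tr.length ∧ Sat tr φ j
  | .alw φ, i => i < tr.length ∧ ∀ j, i ≤ j → j < tr.length → Sat tr φ j
  | .untl φ ψ, i =>
      ∃ j, i ≤ j ∧ j < tr.length ∧ Sat tr ψ j ∧ ∀ k, i ≤ k → k < j → Sat tr φ k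

/-- Bounded eventually: `tr, i ⊨ F≤p φ` iff there is `i ≤ k < min (i+p) |tr|`
with `tr, k ⊨ φ`. -/
def SatFle {α : Type} (tr : List (Set α)) (φ : LTL α) (p i : ℕ) : Prop :=
  ∃ k, i ≤ k ∧ k < min (i + p) tr.length ∧ Sat tr φ k

/-- Bounded always: `tr, i ⊨ G≥p φ` iff `tr, k ⊨ φ` for all
`i ≤ k < min (i+p) |tr|` (vacuously true if this range is empty). -/
def SatGge {α : Type} (tr : List (Set α)) (φ : LTL α) (p i : ℕ) : Prop :=
  ∀ k, i ≤ k → k < min (i + p) tr.length → Sat tr φ k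

/-- Bounded until: `tr, i ⊨ φ U≤p ψ` iff there is `i ≤ k < min (i+p) |tr|`
such that `tr, k ⊨ ψ` and `tr, k' ⊨ φ` for all `i ≤ k' < k`. -/
def SatUle {α : Type} (tr : List (Set α)) (φ ψ : LTL α) (p i : ℕ) : Prop :=
  ∃ k, i ≤ k ∧ k < min (i + p) tr.length ∧ Sat tr ψ k ∧
    ∀ k', i ≤ k' → k' < k → Sat tr φ k'

lemma Sat.lt_length {α : Type} (tr : List (Set α)) :
    ∀ (φ : LTL α) (i : ℕ), Sat tr φ i → i < tr.length := by
  intro φ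
  induction φ with
  | atom p => intro i h; exact h.1
  | neg φ ih => intro i h; exact h.1
  | conj φ ψ ih1 ih2 => intro i h; exact ih1 i h.1
  | disj φ ψ ih1 ih2 => intro i h; exact h.1
  | next φ ih => intro i h; exact Nat.lt_of_succ_lt (ih (i+1) h)
  | ev φ ih => rintro i ⟨j, hij, hj, _⟩; exact lt_of_le_of_lt hij hj
  | alw φ ih => intro i h; exact h.1
  | untl φ ψ ih1 ih2 => rintro i ⟨j, hij, hj, _⟩; exact lt_of_le_of_lt hij hj

/-- Invariant of exponential propagation for `U`: after `i` iterations,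
(a) `cs1 i j = true` iff `j + 2^i ≤ |tr|` and `tr, k ⊨ φ₁` for all
`j ≤ k < j + 2^i`; and (b) `cs2 i j = true` iff `tr, j ⊨ φ₁ U≤2^i φ₂`. -/
theorem stmt_5 {α : Type} [Fintype α] [Nonempty α]
    (tr : List (Set α)) (φ₁ φ₂ : LTL α) (cs1 cs2 : ℕ → ℕ → Bool)
    (h10 : ∀ j, cs1 0 j = true ↔ Sat tr φ₁ j)
    (h20 : ∀ j, cs2 0 j = true ↔ Sat tr φ₂ j)
    (hstep1 : ∀ i j, cs1 (i + 1) j = (cs1 i j && cs1 i (j + 2 ^ i)))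
    (hstep2 : ∀ i j, cs2 (i + 1) j = (cs2 i j || (cs1 i j && cs2 i (j + 2 ^ i)))) :
    ∀ i j,
      (cs1 i j = true ↔
        (j + 2 ^ i ≤ tr.length ∧ ∀ k, j ≤ k → k < j + 2 ^ i → Sat tr φ₁ k)) ∧
      (cs2 i j = true ↔ SatUle tr φ₁ φ₂ (2 ^ i) j) := by
  intro i
  induction i with
  | zero =>
    intro j
    constructor
    · rw [h10 j]
      constructor
      · intro h
        refine ⟨Sat.lt_length tr φ₁ j h, ?_⟩
        intro k hk hk'
        have : k = j := by omega
        rwa [this]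
      · rintro ⟨h1, h2⟩
        exact h2 j le_rfl (by omega)
    · rw [h20 j]
      constructor
      · intro h
        exact ⟨j, le_rfl, by
          simp only [lt_min_iff]
          exact ⟨by omega, Sat.lt_length tr φ₂ j h⟩, h, fun k hk hk' => by omega⟩
      · rintro ⟨k, hjk, hk, hsat, _⟩
        have : k = j := by
          have := lt_min_iff.mp hk
          omega
        rwa [this] at hsat
  | succ i ih =>
    intro j
    have pow : 2 ^ (i + 1) = 2 ^ i + 2 ^ i := by ring
    have hpos : 0 < 2 ^ i := Nat.pow_pos (by norm_num)
    constructor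
    · rw [hstep1 i j, Bool.and_eq_true, (ih j).1, (ih (j + 2 ^ i)).1]
      constructor
      · rintro ⟨⟨hl1, hs1⟩, hl2, hs2⟩
        refine ⟨by omega, ?_⟩
        intro k hk hk'
        rcases lt_or_ge k (j + 2 ^ i) with h | h
        · exact hs1 k hk h
        · exact hs2 k h (by omega)
      · rintro ⟨hl, hs⟩
        exact ⟨⟨by omega, fun k hk hk' => hs k hk (by omega)⟩,
          by omega, fun k hk hk' => hs k (by omega) (by omega)⟩
    · rw [hstep2 i j, Bool.or_eq_true, Bool.and_eq_true, (ih j).2,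
        (ih (j + 2 ^ i)).2, (ih j).1]
      constructor
      · rintro (⟨k, hjk, hk, hsat, hall⟩ | ⟨⟨hl, hs⟩, k, hjk, hk, hsat, hall⟩)
        · refine ⟨k, hjk, ?_, hsat, hall⟩
          have := lt_min_iff.mp hk
          exact lt_min_iff.mpr ⟨by omega, this.2⟩
        · have hk' := lt_min_iff.mp hk
          refine ⟨k, by omega, lt_min_iff.mpr ⟨by omega, hk'.2⟩, hsat, ?_⟩
          intro k' h1 h2
          rcases lt_or_ge k' (j + 2 ^ i) with h | h
          · exact hs k' h1 h
          · exact hall k' h h2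
      · rintro ⟨k, hjk, hk, hsat, hall⟩
        have hk' := lt_min_iff.mp hk
        rcases lt_or_ge k (j + 2 ^ i) with h | h
        · exact Or.inl ⟨k, hjk, lt_min_iff.mpr ⟨h, hk'.2⟩, hsat, hall⟩
        · refine Or.inr ⟨⟨by omega, fun k' h1 h2 => hall k' h1 (by omega)⟩,
            k, h, lt_min_iff.mpr ⟨by omega, hk'.2⟩, hsat,
            fun k' h1 h2 => hall k' (by omega) h2⟩
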